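/- Equal-work, hotter-job lemma: suppose jobs i and j have W̄_i(t^<) = W̄_j(t^<) and W̄_i(t^>) = W̄_j(t^>) (equal remaining work at both times), but T_i(t^<) < T_j(t^<) and T_i(t^>) > T_j(t^>). Then there exists t₀ ∈ (t^<, t^>) with T_i(t₀) = 0. -/
import Mathlib


open MeasureTheory

/-- equal-work, hotter-job lemma: if jobs `i` and `j` receive the same
amount of work over `[t^<, t^>]` but `T_i(t^<) < T_j(t^<)` and `T_i(t^>) > T_j(t^>)`,
then `T_i` must vanish somewhere in the open interval `(t^<, t^>)`. -/
theorem equal_work_hotter_job (α β : ℝ) (hα : α < 0) (hβ : 0 < β)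
    (Si Sj Ti Tj Di Dj : ℝ → ℝ) (tlt tgt : ℝ) (hlt : tlt < tgt)
    (hSi : ∀ t, 0 ≤ Si t ∧ Si t ≤ 1) (hSj : ∀ t, 0 ≤ Sj t ∧ Sj t ≤ 1)
    (hTi : ∀ t, 0 ≤ Ti t) (hTj : ∀ t, 0 ≤ Tj t)
    (hTid : ∀ t, HasDerivAt Ti (Di t) t) (hTjd : ∀ t, HasDerivAt Tj (Dj t) t)
    (hDige : ∀ t, α * (1 - Si t) + β * Si t ≤ Di t)
    (hDjge : ∀ t, α * (1 - Sj t) + β * Sj t ≤ Dj t)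
    (hDieq : ∀ t, 0 < Ti t → Di t = α * (1 - Si t) + β * Si t)
    (hDjeq : ∀ t, 0 < Tj t → Dj t = α * (1 - Sj t) + β * Sj t)
    (hSiint : IntervalIntegrable Si volume tlt tgt)
    (hSjint : IntervalIntegrable Sj volume tlt tgt)
    (hDiint : IntervalIntegrable Di volume tlt tgt)
    (hDjint : IntervalIntegrable Dj volume tlt tgt)
    (hwork : (∫ t in tlt..tgt, Si t) = ∫ t in tlt..tgt, Sj t)
    (hTlt : Ti tlt < Tj tlt) (hTgt : Tj tgt < Ti tgt) :
    ∃ t₀ ∈ Set.Ioo tlt tgt, Ti t₀ = 0 := by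
  by_contra h
  push_neg at h
  have hpos : ∀ t ∈ Set.Ioo tlt tgt, 0 < Ti t := fun t ht =>
    lt_of_le_of_ne (hTi t) (fun e => h t ht e.symm)
  have hle : tlt ≤ tgt := hlt.le
  -- FTC for Ti
  have hFTCi : (∫ t in tlt..tgt, Di t) = Ti tgt - Ti tlt :=
    intervalIntegral.integral_eq_sub_of_hasDerivAt (fun t _ => hTid t) hDiint
  have hFTCj : (∫ t in tlt..tgt, Dj t) = Tj tgt - Tj tlt :=
    intervalIntegral.integral_eq_sub_of_hasDerivAt (fun t _ => hTjd t) hDjint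
  -- on (tlt, tgt], Di = α*(1-Si)+β*Si
  have hcong : (∫ t in tlt..tgt, Di t) = ∫ t in tlt..tgt, (α * (1 - Si t) + β * Si t) := by
    apply intervalIntegral.integral_congr_ae
    filter_upwards with x hx
    rw [Set.uIoc_of_le hle] at hx
    rcases eq_or_lt_of_le hx.2 with he | hlt'
    · apply hDieq
      rw [he]
      exact lt_of_le_of_lt (hTj tgt) hTgt
    · exact hDieq x (hpos x ⟨hx.1, hlt'⟩)
  -- Dj ≥ α*(1-Sj)+β*Sj pointwise
  have hgint : IntervalIntegrable (fun t => α * (1 - Sj t) + β * Sj t) volume tlt tgt := by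
    have : IntervalIntegrable (fun t => α * (1 - Sj t)) volume tlt tgt :=
      ((intervalIntegrable_const (c := (1:ℝ))).sub hSjint).const_mul α
    exact this.add (hSjint.const_mul β)
  have hmono : (∫ t in tlt..tgt, (α * (1 - Sj t) + β * Sj t)) ≤ ∫ t in tlt..tgt, Dj t :=
    intervalIntegral.integral_mono_on hle hgint hDjint (fun t _ => hDjge t)
  -- compute both linear integrals
  have hcompi : (∫ t in tlt..tgt, (α * (1 - Si t) + β * Si t))
      = α * (tgt - tlt) + (β - α) * ∫ t in tlt..tgt, Si t := by
    have h1 : (∫ t in tlt..tgt, (α * (1 - Si t) + β * Si t))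
        = ∫ t in tlt..tgt, (α + (β - α) * Si t) := by
      apply intervalIntegral.integral_congr
      intro x _; ring
    rw [h1, intervalIntegral.integral_add (intervalIntegrable_const)
      (hSiint.const_mul (β - α)), intervalIntegral.integral_const,
      intervalIntegral.integral_const_mul, smul_eq_mul]
    ring
  have hcompj : (∫ t in tlt..tgt, (α * (1 - Sj t) + β * Sj t))
      = α * (tgt - tlt) + (β - α) * ∫ t in tlt..tgt, Sj t := by
    have h1 : (∫ t in tlt..tgt, (α * (1 - Sj t) + β * Sj t))
        = ∫ t in tlt..tgt, (α + (β - α) * Sj t) := by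
      apply intervalIntegral.integral_congr
      intro x _; ring
    rw [h1, intervalIntegral.integral_add (intervalIntegrable_const)
      (hSjint.const_mul (β - α)), intervalIntegral.integral_const,
      intervalIntegral.integral_const_mul, smul_eq_mul]
    ring
  rw [hFTCi] at hcong
  rw [hFTCj] at hmono
  rw [hcompj, ← hwork] at hmono
  rw [hcompi] at hcong
  linarith
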